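/- Define, for r > 0 and x^T ∈ ℝ^{n−1}, the cone Cone_r(x^T) = {y ∈ ℝ^{n+1} : |y^⊥| ≤ r, |y^T − x^T| ≤ |y^⊥|} \ S. Let y ∈ B_r with y ∉ Cone_r(0) and y^⊥ ≠ (0,0) (so that 0 < |y^⊥| < |y^T|), and set w = (y^T, (|y^T|/|y^⊥|)·y^⊥), i.e. the point with tangential part y^T and perpendicular part (|y^T|/|y^⊥|)y^⊥. Then: (i) w ∈ Cone_r(0) and w ∈ Cone_r(y^T); (ii) for every z ∈ Cone_r(0), |y − w| ≤ 2|y − z| and |z − w| ≤ 3|y − z|. -/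

import Mathlib

open MeasureTheory Metric Set
open scoped ContDiff ENNReal

noncomputable section

/-- Ambient space `ℝ^{n+1}`. -/
abbrev E (n : ℕ) := EuclideanSpace ℝ (Fin (n + 1))

/-- Index of the paper's coordinate `x_n`. -/
def idxN (n : ℕ) : Fin (n + 1) := ⟨n - 1, by omega⟩
/-- Index of the paper's coordinate `x_{n+1}`. -/
def idxN1 (n : ℕ) : Fin (n + 1) := ⟨n, by omega⟩

/-- The slit `S = {x_n < 0, x_{n+1} = 0}`. -/
def slit (n : ℕ) : Set (E n) := {x | x (idxN n) < 0 ∧ x (idxN1 n) = 0}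

/-- `ρ(x) = |x^⊥| = √(x_n² + x_{n+1}²)`. -/
def rho (n : ℕ) (x : E n) : ℝ := Real.sqrt ((x (idxN n)) ^ 2 + (x (idxN1 n)) ^ 2)

/-- `ξ(x) = √((x_n + ρ(x))/2)`. -/
def xi (n : ℕ) (x : E n) : ℝ := Real.sqrt ((x (idxN n) + rho n x) / 2)

/-- Partial derivative `∂_i f` of a scalar function. -/
def pd (n : ℕ) (f : E n → ℝ) (i : Fin (n + 1)) (x : E n) : ℝ :=
  fderiv ℝ f x (EuclideanSpace.single i 1)

/-- `|∇f(x)|² = ∑ᵢ (∂ᵢf(x))²`. -/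
def gradNormSq (n : ℕ) (f : E n → ℝ) (x : E n) : ℝ := ∑ i, (pd n f i x) ^ 2

/-- Distance between the tangential parts: `|y^T − p^T|`. -/
def tdist (n : ℕ) (y p : E n) : ℝ :=
  Real.sqrt (∑ i : Fin (n + 1), if (i : ℕ) < n - 1 then (y i - p i) ^ 2 else 0)

/-- The cone `Cone_r(x^T) = {y : |y^⊥| ≤ r, |y^T − x^T| ≤ |y^⊥|} \ S`
(the center is given by the tangential part of `p`). -/
def cone (n : ℕ) (r : ℝ) (p : E n) : Set (E n) :=
  {y | rho n y ≤ r ∧ tdist n y p ≤ rho n y} \ slit n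

/-- The projection `x ↦ (x^T, 0, 0)` onto the first `n-1` coordinates. -/
def projT (n : ℕ) (x : E n) : E n :=
  WithLp.toLp 2 (fun i : Fin (n + 1) => if (i : ℕ) < n - 1 then x i else 0)

/-- Tangential part of a vector, as a vector. -/
def tvec (n : ℕ) (a : E n) : E n := WithLp.toLp 2 (fun i : Fin (n + 1) => if (i : ℕ) < n - 1 then a i else 0)
/-- Perpendicular part of a vector, as a vector. -/
def pvec (n : ℕ) (a : E n) : E n := WithLp.toLp 2 (fun i : Fin (n + 1) => if (i : ℕ) < n - 1 then 0 else a i)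

lemma idx_ne (n : ℕ) (hn : 1 ≤ n) : idxN n ≠ idxN1 n := by
  simp only [idxN, idxN1, Ne, Fin.mk.injEq]; omega

lemma norm_tvec (n : ℕ) (a : E n) :
    ‖tvec n a‖ = Real.sqrt (∑ i : Fin (n+1), if (i : ℕ) < n - 1 then (a i) ^ 2 else 0) := by
  rw [EuclideanSpace.norm_eq]
  congr 1
  refine Finset.sum_congr rfl fun i _ => ?_
  by_cases h : (i : ℕ) < n - 1 <;> simp [tvec, h, sq_abs]

lemma tdist_eq (n : ℕ) (a b : E n) : tdist n a b = ‖tvec n (a - b)‖ := by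
  rw [norm_tvec, tdist]
  simp [PiLp.sub_apply]

lemma norm_pvec (n : ℕ) (hn : 1 ≤ n) (a : E n) : ‖pvec n a‖ = rho n a := by
  rw [EuclideanSpace.norm_eq, rho]
  congr 1
  have h1 : ∀ i : Fin (n+1), ‖pvec n a i‖ ^ 2
      = if ¬ ((i : ℕ) < n - 1) then (a i) ^ 2 else 0 := by
    intro i; by_cases h : (i : ℕ) < n - 1 <;> simp [pvec, h, sq_abs]
  rw [Finset.sum_congr rfl fun i _ => h1 i, ← Finset.sum_filter]
  have hf : Finset.univ.filter (fun i : Fin (n+1) => ¬ ((i : ℕ) < n - 1))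
      = {idxN n, idxN1 n} := by
    ext i
    simp only [Finset.mem_filter, Finset.mem_univ, true_and, Finset.mem_insert,
      Finset.mem_singleton, idxN, idxN1, Fin.ext_iff]
    omega
  rw [hf, Finset.sum_pair (idx_ne n hn)]

lemma norm_tvec_le (n : ℕ) (a : E n) : ‖tvec n a‖ ≤ ‖a‖ := by
  rw [EuclideanSpace.norm_eq, EuclideanSpace.norm_eq]
  apply Real.sqrt_le_sqrt
  refine Finset.sum_le_sum fun i _ => ?_
  by_cases h : (i : ℕ) < n - 1 <;> simp [tvec, h] <;> positivity

lemma norm_pvec_le (n : ℕ) (a : E n) : ‖pvec n a‖ ≤ ‖a‖ := by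
  rw [EuclideanSpace.norm_eq, EuclideanSpace.norm_eq]
  apply Real.sqrt_le_sqrt
  refine Finset.sum_le_sum fun i _ => ?_
  by_cases h : (i : ℕ) < n - 1 <;> simp [pvec, h] <;> positivity

lemma tvec_sub (n : ℕ) (a b : E n) : tvec n (a - b) = tvec n a - tvec n b := by
  ext i; by_cases h : (i : ℕ) < n - 1 <;> simp [tvec, h]

lemma pvec_sub (n : ℕ) (a b : E n) : pvec n (a - b) = pvec n a - pvec n b := by
  ext i; by_cases h : (i : ℕ) < n - 1 <;> simp [pvec, h]

/-- projection onto the cone.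
For `y ∈ B_r \ (S ∪ Cone_r(0))` with `y^⊥ ≠ 0`, the point
`w = (y^T, (|y^T|/|y^⊥|)·y^⊥)` lies in `Cone_r(0) ∩ Cone_r(y^T)`, and for every
`z ∈ Cone_r(0)` one has `|y − w| ≤ 2|y − z|` and `|z − w| ≤ 3|y − z|`. -/
theorem stmt19 (n : ℕ) (hn : 2 ≤ n) (r : ℝ) (hr : 0 < r) (y : E n)
    (hy : y ∈ ball (0 : E n) r) (hyS : y ∉ slit n)
    (hyc : y ∉ cone n r 0) (hperp : ¬(y (idxN n) = 0 ∧ y (idxN1 n) = 0)) :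
    ∀ w : E n,
      (∀ i : Fin (n + 1),
        w i = if (i : ℕ) < n - 1 then y i else (tdist n y 0 / rho n y) * y i) →
      (w ∈ cone n r 0 ∧ w ∈ cone n r (projT n y)) ∧
        ∀ z ∈ cone n r 0, ‖y - w‖ ≤ 2 * ‖y - z‖ ∧ ‖z - w‖ ≤ 3 * ‖y - z‖ := by
  intro w hw
  have h1n : 1 ≤ n := by omega
  have hN : ¬ ((idxN n : ℕ) < n - 1) := by simp [idxN]
  have hN1 : ¬ ((idxN1 n : ℕ) < n - 1) := by simp [idxN1]
  set t := tdist n y 0 with ht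
  set ρ := rho n y with hρ
  have hynorm : ‖y‖ < r := by simpa using hy
  have htle : t ≤ ‖y‖ := by
    rw [ht, tdist_eq, sub_zero]; exact norm_tvec_le n y
  have hrhole : ρ ≤ ‖y‖ := by
    rw [hρ, ← norm_pvec n h1n]; exact norm_pvec_le n y
  have hρpos : 0 < ρ := by
    rw [hρ, ← norm_pvec n h1n]
    rw [norm_pos_iff]
    intro hzero
    apply hperp
    constructor
    · have := congrArg (fun v : E n => v (idxN n)) hzero; simpa [pvec, hN] using this
    · have := congrArg (fun v : E n => v (idxN1 n)) hzero; simpa [pvec, hN1] using this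
  have hρr : ρ < r := lt_of_le_of_lt hrhole hynorm
  have htr : t < r := lt_of_le_of_lt htle hynorm
  have hρt : ρ < t := by
    by_contra h
    push_neg at h
    exact hyc ⟨⟨le_of_lt hρr, h⟩, hyS⟩
  set c := t / ρ with hc
  have hcpos : 0 < c := div_pos (lt_trans hρpos hρt) hρpos
  have hc1 : 1 < c := (one_lt_div hρpos).mpr hρt
  have hcρ : c * ρ = t := div_mul_cancel₀ t (ne_of_gt hρpos)
  -- components of w
  have hwT : tvec n w = tvec n y := by
    ext i; by_cases h : (i : ℕ) < n - 1 <;> simp [tvec, hw i, h]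
  have hwP : pvec n w = c • pvec n y := by
    ext i
    by_cases h : (i : ℕ) < n - 1 <;> simp [pvec, hw i, h, PiLp.smul_apply, smul_eq_mul]
  have hrw : rho n w = t := by
    rw [← norm_pvec n h1n, hwP, norm_smul, norm_pvec n h1n, Real.norm_eq_abs,
      abs_of_pos hcpos, ← hρ, hcρ]
  have htw0 : tdist n w 0 = t := by
    rw [tdist_eq, sub_zero, hwT, ht, tdist_eq, sub_zero]
  have hwn : w (idxN n) = c * y (idxN n) := by rw [hw (idxN n), if_neg hN]
  have hwn1 : w (idxN1 n) = c * y (idxN1 n) := by rw [hw (idxN1 n), if_neg hN1]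
  have hwS : w ∉ slit n := by
    rintro ⟨h1, h2⟩
    apply hyS
    rw [hwn] at h1; rw [hwn1] at h2
    constructor
    · nlinarith
    · rcases mul_eq_zero.mp h2 with h | h
      · exact absurd h (ne_of_gt hcpos)
      · exact h
  have htnonneg : 0 ≤ t := le_of_lt (lt_trans hρpos hρt)
  have hw0 : w ∈ cone n r 0 := by
    refine ⟨⟨?_, ?_⟩, hwS⟩
    · rw [hrw]; exact le_of_lt htr
    · rw [hrw, htw0]
  have hwproj : w ∈ cone n r (projT n y) := by
    refine ⟨⟨?_, ?_⟩, hwS⟩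
    · rw [hrw]; exact le_of_lt htr
    · rw [hrw, tdist_eq]
      have : tvec n (w - projT n y) = 0 := by
        ext i
        by_cases h : (i : ℕ) < n - 1 <;>
          simp [tvec, projT, PiLp.sub_apply, hw i, h]
      rw [this, norm_zero]
      exact htnonneg
  refine ⟨⟨hw0, hwproj⟩, ?_⟩
  -- distance from y to w
  have hyw : ‖y - w‖ = t - ρ := by
    have hrep : y - w = (1 - c) • pvec n y := by
      ext i
      by_cases h : (i : ℕ) < n - 1 <;>
        simp [pvec, PiLp.sub_apply, PiLp.smul_apply, smul_eq_mul, hw i, h] <;> ring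
    rw [hrep, norm_smul, norm_pvec n h1n, Real.norm_eq_abs, ← hρ,
      abs_of_nonpos (by linarith)]
    rw [hc]
    field_simp
    ring
  intro z hz
  obtain ⟨⟨hzr, hzt⟩, hzS⟩ := hz
  -- triangle inequalities
  have h2 : t ≤ tdist n y z + tdist n z 0 := by
    rw [ht, tdist_eq, tdist_eq, tdist_eq]
    have : y - (0 : E n) = (y - z) + (z - 0) := by abel
    rw [this]
    have : tvec n ((y - z) + (z - 0)) = tvec n (y - z) + tvec n (z - 0) := by
      ext i; by_cases h : (i : ℕ) < n - 1 <;> simp [tvec, h]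
    rw [this]
    exact norm_add_le _ _
  have h3 : tdist n y z ≤ ‖y - z‖ := by rw [tdist_eq]; exact norm_tvec_le n _
  have h4 : rho n z ≤ ρ + ‖y - z‖ := by
    have ha := norm_sub_norm_le (pvec n z) (pvec n y)
    have hb : pvec n z - pvec n y = pvec n (z - y) := (pvec_sub n z y).symm
    have hcle : ‖pvec n (z - y)‖ ≤ ‖z - y‖ := norm_pvec_le n _
    rw [hb] at ha
    rw [norm_pvec n h1n, norm_pvec n h1n] at ha
    rw [norm_sub_rev] at hcle
    linarith
  have h5 : tdist n z 0 ≤ rho n z := hzt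
  have hkey : t - ρ ≤ 2 * ‖y - z‖ := by linarith
  constructor
  · rw [hyw]; exact hkey
  · have h6 : ‖z - w‖ ≤ ‖z - y‖ + ‖y - w‖ := by
      have : z - w = (z - y) + (y - w) := by abel
      rw [this]; exact norm_add_le _ _
    rw [norm_sub_rev z y, hyw] at h6
    linarith
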